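/- Let L be a commutative local principal ideal ring with maximal ideal pL and residue field of size p. Let A ∈ L^{m×n}, Q ∈ L^{n×k} with k ≤ min(m,n), and suppose S_k(AQ) ≠ S_k(A), i.e. the first k invariant factors of AQ differ from those of A. If y ∈ L^n is chosen with independent uniformly random entries, then the probability that S_k([AQ | Ay]) = S_k(AQ) is at most 1/p. -/

import Mathlib

open Matrix

section Basic
variable {L : Type*} [CommRing L]

/-- A strictly monotone map of `Fin`s satisfies `t ≤ σ t`. -/
lemma strictMono_nat_le {j N : ℕ} {σ : Fin j → Fin N} (hσ : StrictMono σ) :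
    ∀ t : Fin j, (t : ℕ) ≤ (σ t : ℕ) := by
  have key : ∀ (tv : ℕ) (ht : tv < j), tv ≤ (σ ⟨tv, ht⟩ : ℕ) := by
    intro tv
    induction tv with
    | zero => intro ht; exact Nat.zero_le _
    | succ s ih =>
      intro ht
      have h2 := ih (Nat.lt_of_succ_lt ht)
      have h3 := hσ (show (⟨s, Nat.lt_of_succ_lt ht⟩ : Fin j) < ⟨s+1, ht⟩ by
        simp [Fin.lt_def])
      rw [Fin.lt_def] at h3
      omega
  intro t; exact key t.val t.isLt

lemma dvd_total_of_local [IsLocalRing L] [IsPrincipalIdealRing L] (a b : L) :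
    a ∣ b ∨ b ∣ a := by
  obtain ⟨d, hd0⟩ := (IsPrincipalIdealRing.principal (Ideal.span {a, b})).principal
  have hd : Ideal.span {a, b} = Ideal.span {d} := hd0
  have ha : a ∈ Ideal.span ({d} : Set L) := by
    rw [← hd]; exact Ideal.subset_span (by simp)
  have hb : b ∈ Ideal.span ({d} : Set L) := by
    rw [← hd]; exact Ideal.subset_span (by simp)
  obtain ⟨a', ha'⟩ := Ideal.mem_span_singleton.mp ha
  obtain ⟨b', hb'⟩ := Ideal.mem_span_singleton.mp hb
  have hdmem : d ∈ Ideal.span ({a, b} : Set L) := by rw [hd]; exact Ideal.subset_span rfl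
  obtain ⟨x, y, hxy⟩ := Ideal.mem_span_pair.mp hdmem
  by_cases hu2 : IsUnit (x * a')
  · have hau : IsUnit a' := isUnit_of_mul_isUnit_right hu2
    obtain ⟨u, hu3⟩ := hau
    left
    have had : a ∣ d := ⟨(u⁻¹ : Lˣ), by rw [ha', ← hu3, mul_assoc]; simp⟩
    exact dvd_trans had ⟨b', hb'⟩
  · by_cases hu4 : IsUnit (y * b')
    · have hbu : IsUnit b' := isUnit_of_mul_isUnit_right hu4
      obtain ⟨u, hu3⟩ := hbu
      right
      have hbd : b ∣ d := ⟨(u⁻¹ : Lˣ), by rw [hb', ← hu3, mul_assoc]; simp⟩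
      exact dvd_trans hbd ⟨a', ha'⟩
    · have hsum : ¬ IsUnit (x * a' + y * b') := fun h => by
        rcases IsLocalRing.isUnit_or_isUnit_of_isUnit_add h with h' | h' <;> tauto
      have hu : IsUnit (1 - (x * a' + y * b')) :=
        (IsLocalRing.isUnit_or_isUnit_one_sub_self (x * a' + y * b')).resolve_left hsum
      have h0 : d * (1 - (x * a' + y * b')) = 0 := by
        have hdd : d * (x * a' + y * b') = d := by
          calc d * (x * a' + y * b') = x * (d * a') + y * (d * b') := by ring
          _ = x * a + y * b := by rw [← ha', ← hb']
          _ = d := hxy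
        rw [mul_sub, mul_one, hdd, sub_self]
      have hd0 : d = 0 := by
        obtain ⟨u, hu'⟩ := hu
        have := congrArg (· * ((u⁻¹ : Lˣ) : L)) h0
        simpa [← hu', mul_assoc] using this
      left
      rw [ha', hb', hd0, zero_mul, zero_mul]

/-- In a finite ring with total divisibility, any nonempty finset has a member dividing all. -/
lemma exists_dvd_all_finset (htot : ∀ a b : L, a ∣ b ∨ b ∣ a) (s : Finset L)
    (hs : s.Nonempty) : ∃ g ∈ s, ∀ x ∈ s, g ∣ x := by
  classical
  induction s using Finset.induction_on with
  | empty => exact absurd hs (by simp)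
  | @insert a s ha ih =>
    rcases Finset.eq_empty_or_nonempty s with rfl | hs'
    · exact ⟨a, by simp⟩
    · obtain ⟨g, hg, hgall⟩ := ih hs'
      rcases htot a g with h | h
      · exact ⟨a, Finset.mem_insert_self _ _, fun x hx => by
          rcases Finset.mem_insert.mp hx with rfl | hx
          · exact dvd_rfl
          · exact dvd_trans h (hgall x hx)⟩
      · exact ⟨g, Finset.mem_insert_of_mem hg, fun x hx => by
          rcases Finset.mem_insert.mp hx with rfl | hx
          · exact h
          · exact hgall x hx⟩

lemma exists_dvd_all_set [Fintype L] (htot : ∀ a b : L, a ∣ b ∨ b ∣ a)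
    (S : Set L) (hS : S.Nonempty) : ∃ g ∈ S, ∀ x ∈ S, g ∣ x := by
  classical
  have hfin : S.Finite := Set.toFinite S
  obtain ⟨g, hg, hgall⟩ := exists_dvd_all_finset htot hfin.toFinset
    (by rwa [Set.Finite.toFinset_nonempty])
  exact ⟨g, hfin.mem_toFinset.mp hg, fun x hx => hgall x (hfin.mem_toFinset.mpr hx)⟩

lemma exists_span_eq_span_singleton [Fintype L] (htot : ∀ a b : L, a ∣ b ∨ b ∣ a)
    (S : Set L) (hS : S.Nonempty) : ∃ g ∈ S, Ideal.span S = Ideal.span {g} := by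
  classical
  have hfin : S.Finite := Set.toFinite S
  obtain ⟨g, hg, hgall⟩ := exists_dvd_all_finset htot hfin.toFinset
    (by rwa [Set.Finite.toFinset_nonempty])
  rw [Set.Finite.mem_toFinset] at hg
  refine ⟨g, hg, le_antisymm ?_ ?_⟩
  · rw [Ideal.span_le]
    intro x hx
    exact Ideal.mem_span_singleton.mpr (hgall x (hfin.mem_toFinset.mpr hx))
  · exact Ideal.span_mono (by simpa using hg)

end Basic

def minorsIdeal {L : Type*} [CommRing L] {m n : ℕ} (i : ℕ)
    (A : Matrix (Fin m) (Fin n) L) : Ideal L :=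
  Ideal.span { x | ∃ σ : Fin i → Fin m, ∃ τ : Fin i → Fin n,
    StrictMono σ ∧ StrictMono τ ∧ x = (A.submatrix σ τ).det }

section Minors
variable {L : Type*} [CommRing L] {m n i N : ℕ}

lemma strictMono_elim0 {N : ℕ} : StrictMono (fun t : Fin 0 => (t.elim0 : Fin N)) :=
  fun t => t.elim0

lemma minorsIdeal_zero (A : Matrix (Fin m) (Fin n) L) : minorsIdeal 0 A = ⊤ := by
  rw [Ideal.eq_top_iff_one]
  apply Ideal.subset_span
  exact ⟨fun t => t.elim0, fun t => t.elim0, strictMono_elim0, strictMono_elim0,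
    Matrix.det_fin_zero.symm⟩

lemma det_submatrix_mem_minorsIdeal (A : Matrix (Fin m) (Fin n) L)
    {σ : Fin i → Fin m} {τ : Fin i → Fin n} (hσ : StrictMono σ) (hτ : StrictMono τ) :
    (A.submatrix σ τ).det ∈ minorsIdeal i A :=
  Ideal.subset_span ⟨σ, τ, hσ, hτ, rfl⟩

/-- Any injective `Fin i → Fin N` factors as a strictly monotone map after a permutation. -/
lemma exists_strictMono_comp_perm (p : Fin i → Fin N) (hp : Function.Injective p) :
    ∃ (ρ : Fin i → Fin N) (e : Equiv.Perm (Fin i)), StrictMono ρ ∧ p = ρ ∘ e := by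
  classical
  set s : Finset (Fin N) := Finset.univ.image p with hs
  have hcard : s.card = i := by
    rw [hs, Finset.card_image_of_injective _ hp, Finset.card_univ, Fintype.card_fin]
  set ρ : Fin i → Fin N := fun t => s.orderEmbOfFin hcard t with hρ
  have hρmono : StrictMono ρ := (s.orderEmbOfFin hcard).strictMono
  have hmem : ∀ r, p r ∈ s := fun r => Finset.mem_image.mpr ⟨r, Finset.mem_univ r, rfl⟩
  have hex : ∀ r, ∃ t, ρ t = p r := by
    intro r
    have := Finset.range_orderEmbOfFin s hcard
    have hr : p r ∈ Set.range (s.orderEmbOfFin hcard) := by rw [this]; exact hmem r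
    obtain ⟨t, ht⟩ := hr
    exact ⟨t, ht⟩
  choose e0 he0 using hex
  have he0inj : Function.Injective e0 := by
    intro a b hab
    apply hp
    rw [← he0 a, ← he0 b, hab]
  have he0bij : Function.Bijective e0 :=
    (Finite.injective_iff_bijective).mp he0inj
  refine ⟨ρ, Equiv.ofBijective e0 he0bij, hρmono, ?_⟩
  funext r
  exact (he0 r).symm


lemma det_mul_mem_span_minors (R : Matrix (Fin i) (Fin N) L) (C : Matrix (Fin N) (Fin i) L) :
    (R * C).det ∈
      Ideal.span {x | ∃ ρ : Fin i → Fin N, StrictMono ρ ∧ x = (C.submatrix ρ id).det} := by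
  classical
  have hrow : (R * C) = Matrix.of (fun r => ∑ t : Fin N, R r t • C t) := by
    ext r c
    simp [Matrix.mul_apply, Finset.sum_apply]
  have h1 : (R * C).det =
      (detRowAlternating : (Fin i → L) [⋀^Fin i]→ₗ[L] L).toMultilinearMap
        (fun r => ∑ t : Fin N, R r t • C t) := by
    rw [hrow]; rfl
  rw [h1, MultilinearMap.map_sum]
  apply Ideal.sum_mem
  intro p _
  have h2 : (detRowAlternating : (Fin i → L) [⋀^Fin i]→ₗ[L] L).toMultilinearMap
      (fun r => R r (p r) • C (p r))
      = (∏ r, R r (p r)) • (detRowAlternating : (Fin i → L) [⋀^Fin i]→ₗ[L] L)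
          (fun r => C (p r)) :=
    MultilinearMap.map_smul_univ _ _ _
  rw [h2]
  by_cases hinj : Function.Injective p
  · obtain ⟨ρ, e, hρ, hpe⟩ := exists_strictMono_comp_perm p hinj
    have h3 : (detRowAlternating : (Fin i → L) [⋀^Fin i]→ₗ[L] L) (fun r => C (p r))
        = ((C.submatrix ρ id).submatrix e id).det := by
      rw [Matrix.submatrix_submatrix]
      have hfun : (fun r => C (p r)) = fun r c => (C.submatrix (ρ ∘ ⇑e) (id ∘ id)) r c := by
        funext r c
        simp [Matrix.submatrix_apply, hpe]
      show (detRowAlternating : (Fin i → L) [⋀^Fin i]→ₗ[L] L)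
          (fun r => C (p r)) = detRowAlternating (C.submatrix (ρ ∘ ⇑e) (id ∘ id))
      rw [hfun]
    rw [h3, Matrix.det_permute]
    have hbase : (C.submatrix ρ id).det ∈
        Ideal.span {x | ∃ ρ : Fin i → Fin N, StrictMono ρ ∧ x = (C.submatrix ρ id).det} :=
      Ideal.subset_span ⟨ρ, hρ, rfl⟩
    exact Submodule.smul_mem _ _ (Ideal.mul_mem_left _ _ hbase)
  · rw [Function.not_injective_iff] at hinj
    obtain ⟨a, b, hab, hne⟩ := hinj
    have h0 : (detRowAlternating : (Fin i → L) [⋀^Fin i]→ₗ[L] L) (fun r => C (p r)) = 0 :=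
      AlternatingMap.map_eq_zero_of_eq _ _ (by rw [hab]) hne
    rw [h0, smul_zero]
    exact Submodule.zero_mem _


lemma minorsIdeal_transpose (A : Matrix (Fin m) (Fin n) L) :
    minorsIdeal i Aᵀ = minorsIdeal i A := by
  unfold minorsIdeal
  congr 1
  ext x
  constructor
  · rintro ⟨σ, τ, hσ, hτ, rfl⟩
    refine ⟨τ, σ, hτ, hσ, ?_⟩
    rw [← Matrix.det_transpose, Matrix.transpose_submatrix, Matrix.transpose_transpose]
  · rintro ⟨σ, τ, hσ, hτ, rfl⟩
    refine ⟨τ, σ, hτ, hσ, ?_⟩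
    rw [← Matrix.det_transpose, Matrix.transpose_submatrix]

lemma minorsIdeal_mul_left_le (U : Matrix (Fin m) (Fin m) L) (M : Matrix (Fin m) (Fin n) L) :
    minorsIdeal i (U * M) ≤ minorsIdeal i M := by
  rw [minorsIdeal, Ideal.span_le]
  rintro x ⟨σ, τ, hσ, hτ, rfl⟩
  have hsub : (U * M).submatrix σ τ = (U.submatrix σ id) * (M.submatrix id τ) :=
    Matrix.submatrix_mul U M σ id τ Function.bijective_id
  rw [hsub]
  refine Ideal.span_le.mpr ?_ (det_mul_mem_span_minors _ _)
  rintro y ⟨ρ, hρ, rfl⟩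
  rw [Matrix.submatrix_submatrix]
  exact det_submatrix_mem_minorsIdeal M (show StrictMono (id ∘ ρ) by simpa using hρ)
    (show StrictMono (τ ∘ id) by simpa using hτ)

lemma minorsIdeal_mul_left_eq {U W : Matrix (Fin m) (Fin m) L} (h : W * U = 1)
    (M : Matrix (Fin m) (Fin n) L) :
    minorsIdeal i (U * M) = minorsIdeal i M := by
  refine le_antisymm (minorsIdeal_mul_left_le _ _) ?_
  have hM : M = W * (U * M) := by rw [← Matrix.mul_assoc, h, Matrix.one_mul]
  calc minorsIdeal i M = minorsIdeal i (W * (U * M)) := by rw [← hM]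
  _ ≤ minorsIdeal i (U * M) := minorsIdeal_mul_left_le _ _

lemma minorsIdeal_mul_right_eq {V W : Matrix (Fin n) (Fin n) L} (h : V * W = 1)
    (M : Matrix (Fin m) (Fin n) L) :
    minorsIdeal i (M * V) = minorsIdeal i M := by
  have hWV : Wᵀ * Vᵀ = 1 := by rw [← Matrix.transpose_mul, h, Matrix.transpose_one]
  rw [← minorsIdeal_transpose (M * V), Matrix.transpose_mul,
    minorsIdeal_mul_left_eq hWV, minorsIdeal_transpose]

end Minors


section Diag
variable {L : Type*} [CommRing L] {m n k j i : ℕ}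

def diagMat (m n : ℕ) (d : ℕ → L) : Matrix (Fin m) (Fin n) L :=
  Matrix.of fun r c => if (r : ℕ) = (c : ℕ) then d r else 0

lemma chain_dvd {d : ℕ → L} (hd : ∀ j, d j ∣ d (j+1)) {a b : ℕ} (h : a ≤ b) : d a ∣ d b := by
  induction b with
  | zero => rw [Nat.le_zero.mp h]
  | succ b ih =>
    rcases eq_or_lt_of_le h with h' | h'
    · rw [h']
    · exact dvd_trans (ih (Nat.lt_succ_iff.mp h')) (hd b)

lemma prod_range_dvd_prod_strictMono {d : ℕ → L} (hd : ∀ j, d j ∣ d (j+1))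
    {N : ℕ} {σ : Fin j → Fin N} (hσ : StrictMono σ) :
    (∏ t ∈ Finset.range j, d t) ∣ ∏ t : Fin j, d (σ t) := by
  rw [← Fin.prod_univ_eq_prod_range]
  exact Finset.prod_dvd_prod_of_dvd _ _ (fun t _ => chain_dvd hd (strictMono_nat_le hσ t))

lemma diagMat_submatrix_eq_diagonal {d : ℕ → L} {σ : Fin j → Fin m} {τ : Fin j → Fin n}
    (hσ : StrictMono σ) (hall : ∀ t, (σ t : ℕ) = (τ t : ℕ)) :
    (diagMat m n d).submatrix σ τ = Matrix.diagonal (fun t => d (σ t)) := by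
  ext s t
  by_cases hst : s = t
  · subst hst
    simp [diagMat, Matrix.submatrix_apply, Matrix.diagonal_apply_eq, hall s]
  · have hne : (σ s : ℕ) ≠ (τ t : ℕ) := by
      intro hEq
      apply hst
      apply hσ.injective
      apply Fin.ext
      rw [hEq, ← hall t]
    simp [diagMat, Matrix.submatrix_apply, Matrix.diagonal_apply_ne _ hst, hne]

lemma perm_eq_refl_of_strictMono {π : Equiv.Perm (Fin j)} (hπ : StrictMono π) :
    ∀ t, π t = t := by
  have hsymm : StrictMono ⇑π.symm := by
    intro a b hab
    rcases lt_trichotomy (π.symm a) (π.symm b) with h | h | h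
    · exact h
    · exfalso; rw [← π.apply_symm_apply a, ← π.apply_symm_apply b, h] at hab
      exact lt_irrefl _ hab
    · exfalso
      have := hπ h
      rw [π.apply_symm_apply, π.apply_symm_apply] at this
      exact lt_irrefl _ (lt_trans hab this)
  intro t
  have h1 : (t : ℕ) ≤ (π t : ℕ) := strictMono_nat_le hπ t
  have h2 : ((π t : Fin j) : ℕ) ≤ ((π.symm (π t)) : ℕ) := strictMono_nat_le hsymm (π t)
  rw [π.symm_apply_apply] at h2
  exact Fin.ext (le_antisymm h2 h1)

lemma det_diagMat_submatrix_eq_zero {d : ℕ → L} {σ : Fin j → Fin m} {τ : Fin j → Fin n}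
    (hσ : StrictMono σ) (hτ : StrictMono τ) (hnot : ¬ ∀ t, (σ t : ℕ) = (τ t : ℕ)) :
    ((diagMat m n d).submatrix σ τ).det = 0 := by
  rw [Matrix.det_apply]
  apply Finset.sum_eq_zero
  intro π _
  by_cases hall : ∀ s, ((σ (π s) : ℕ)) = (τ s : ℕ)
  · exfalso
    have hπmono : StrictMono ⇑π := by
      intro a b hab
      have h1 : (τ a : ℕ) < (τ b : ℕ) := hτ hab
      rw [← hall a, ← hall b] at h1
      exact (hσ.lt_iff_lt).mp (Fin.lt_def.mpr h1)
    apply hnot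
    intro t
    have := perm_eq_refl_of_strictMono hπmono t
    rw [← hall t, this]
  · push_neg at hall
    obtain ⟨s, hs⟩ := hall
    have hzero : (diagMat m n d).submatrix σ τ (π s) s = 0 := by
      simp [diagMat, Matrix.submatrix_apply, hs]
    rw [show (∏ t : Fin j, (diagMat m n d).submatrix σ τ (π t) t) = 0 from
      Finset.prod_eq_zero (Finset.mem_univ s) hzero, smul_zero]

lemma minorsIdeal_diagMat {d : ℕ → L} (hd : ∀ j, d j ∣ d (j+1)) (him : i ≤ m) (hin : i ≤ n) :
    minorsIdeal i (diagMat m n d) = Ideal.span {∏ t ∈ Finset.range i, d t} := by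
  refine le_antisymm ?_ ?_
  · rw [minorsIdeal, Ideal.span_le]
    rintro x ⟨σ, τ, hσ, hτ, rfl⟩
    by_cases hall : ∀ t, (σ t : ℕ) = (τ t : ℕ)
    · rw [diagMat_submatrix_eq_diagonal hσ hall, Matrix.det_diagonal]
      exact Ideal.mem_span_singleton.mpr (prod_range_dvd_prod_strictMono hd hσ)
    · rw [det_diagMat_submatrix_eq_zero hσ hτ hall]
      exact Ideal.zero_mem _
  · rw [Ideal.span_le, Set.singleton_subset_iff]
    have hdet : ((diagMat m n d).submatrix (Fin.castLE him) (Fin.castLE hin)).det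
        = ∏ t ∈ Finset.range i, d t := by
      have heq := diagMat_submatrix_eq_diagonal (m := m) (n := n) (d := d)
        (σ := Fin.castLE him) (τ := Fin.castLE hin) (Fin.strictMono_castLE him)
        (fun t => rfl)
      rw [heq, Matrix.det_diagonal, ← Fin.prod_univ_eq_prod_range]
      rfl
    rw [← hdet]
    exact det_submatrix_mem_minorsIdeal _ (Fin.strictMono_castLE him) (Fin.strictMono_castLE hin)

lemma diagMat_mul_apply {d : ℕ → L} (G : Matrix (Fin n) (Fin k) L) (r : Fin m) (c : Fin k) :
    (diagMat m n d * G) r c = if h : (r : ℕ) < n then d r * G ⟨r, h⟩ c else 0 := by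
  rw [Matrix.mul_apply]
  by_cases h : (r : ℕ) < n
  · rw [dif_pos h, Finset.sum_eq_single (⟨(r : ℕ), h⟩ : Fin n)]
    · simp [diagMat]
    · intro b _ hb
      have : (r : ℕ) ≠ (b : ℕ) := fun hEq => hb (by apply Fin.ext; rw [← hEq])
      simp [diagMat, this]
    · intro h'; exact absurd (Finset.mem_univ _) h'
  · rw [dif_neg h]
    apply Finset.sum_eq_zero
    intro b _
    have : (r : ℕ) ≠ (b : ℕ) := by
      intro hEq; exact h (hEq ▸ b.isLt)
    simp [diagMat, this]

lemma diag_mul_submatrix_eq {d : ℕ → L} {G : Matrix (Fin n) (Fin k) L}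
    {σ : Fin j → Fin m} {τ : Fin j → Fin k} (hrows : ∀ t, (σ t : ℕ) < n) :
    (diagMat m n d * G).submatrix σ τ =
      Matrix.diagonal (fun t => d (σ t)) * G.submatrix (fun t => ⟨σ t, hrows t⟩) τ := by
  ext s t
  rw [Matrix.submatrix_apply, diagMat_mul_apply, dif_pos (hrows s), Matrix.diagonal_mul,
    Matrix.submatrix_apply]

lemma det_diag_mul_submatrix {d : ℕ → L} {G : Matrix (Fin n) (Fin k) L}
    {σ : Fin j → Fin m} {τ : Fin j → Fin k} (hrows : ∀ t, (σ t : ℕ) < n) :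
    ((diagMat m n d * G).submatrix σ τ).det =
      (∏ t : Fin j, d (σ t)) * (G.submatrix (fun t => ⟨σ t, hrows t⟩) τ).det := by
  rw [diag_mul_submatrix_eq hrows, Matrix.det_mul, Matrix.det_diagonal]

lemma minorsIdeal_diag_mul_le {d : ℕ → L} (hd : ∀ j, d j ∣ d (j+1))
    (G : Matrix (Fin n) (Fin k) L) :
    minorsIdeal i (diagMat m n d * G) ≤ Ideal.span {∏ t ∈ Finset.range i, d t} := by
  rw [minorsIdeal, Ideal.span_le]
  rintro x ⟨σ, τ, hσ, hτ, rfl⟩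
  by_cases hrows : ∀ t, (σ t : ℕ) < n
  · rw [det_diag_mul_submatrix hrows]
    exact Ideal.mem_span_singleton.mpr
      (dvd_mul_of_dvd_left (prod_range_dvd_prod_strictMono hd hσ) _)
  · push_neg at hrows
    obtain ⟨t0, ht0⟩ := hrows
    have hdet : ((diagMat m n d * G).submatrix σ τ).det = 0 := by
      apply Matrix.det_eq_zero_of_row_eq_zero t0
      intro c
      rw [Matrix.submatrix_apply, diagMat_mul_apply, dif_neg (not_lt.mpr ht0)]
    rw [hdet]
    exact Ideal.zero_mem _

end Diag

section SNF
variable {L : Type*} [CommRing L]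

lemma matrix_isUnit_of_mul_eq_one {w : ℕ} {A B : Matrix (Fin w) (Fin w) L}
    (h : A * B = 1) : IsUnit A :=
  ⟨⟨A, B, h, mul_eq_one_comm.mp h⟩, rfl⟩

def extC {m n : ℕ} (x : L) (M : Matrix (Fin m) (Fin n) L) :
    Matrix (Fin (m+1)) (Fin (n+1)) L :=
  Matrix.of fun r c =>
    Fin.cases (Fin.cases x (fun _ => 0) c) (fun r' => Fin.cases 0 (fun c' => M r' c') c) r

variable {m n w : ℕ} {x y : L}

@[simp] lemma extC_zero_zero (M : Matrix (Fin m) (Fin n) L) : extC x M 0 0 = x := by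
  simp [extC]

@[simp] lemma extC_zero_succ (M : Matrix (Fin m) (Fin n) L) (c : Fin n) :
    extC x M 0 c.succ = 0 := by simp [extC]

@[simp] lemma extC_succ_zero (M : Matrix (Fin m) (Fin n) L) (r : Fin m) :
    extC x M r.succ 0 = 0 := by simp [extC]

@[simp] lemma extC_succ_succ (M : Matrix (Fin m) (Fin n) L) (r : Fin m) (c : Fin n) :
    extC x M r.succ c.succ = M r c := by simp [extC]

lemma extC_mul {p : ℕ} (M : Matrix (Fin m) (Fin n) L) (N : Matrix (Fin n) (Fin p) L) :
    extC x M * extC y N = extC (x * y) (M * N) := by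
  ext r c
  rw [Matrix.mul_apply, Fin.sum_univ_succ]
  induction r using Fin.cases with
  | zero =>
    induction c using Fin.cases with
    | zero => simp
    | succ c' => simp
  | succ r' =>
    induction c using Fin.cases with
    | zero => simp
    | succ c' => simp [Matrix.mul_apply]

lemma extC_one : extC (1 : L) (1 : Matrix (Fin m) (Fin m) L) = 1 := by
  ext r c
  induction r using Fin.cases with
  | zero =>
    induction c using Fin.cases with
    | zero => simp [Matrix.one_apply]
    | succ c' => simp [Matrix.one_apply, (Fin.succ_ne_zero c').symm]
  | succ r' =>
    induction c using Fin.cases with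
    | zero => simp [Matrix.one_apply, Fin.succ_ne_zero r']
    | succ c' => simp [Matrix.one_apply, Fin.succ_inj]

lemma extC_diagMat (a : L) (d e : ℕ → L) (h0 : e 0 = a) (hs : ∀ j, e (j+1) = d j) :
    extC a (diagMat m n d) = diagMat (m+1) (n+1) e := by
  ext r c
  induction r using Fin.cases with
  | zero =>
    induction c using Fin.cases with
    | zero => simp [diagMat, h0]
    | succ c' =>
      have : ((0 : Fin (m+1)) : ℕ) ≠ ((c'.succ : Fin (n+1)) : ℕ) := by
        simp [Fin.val_succ]
      simp [diagMat, this]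
  | succ r' =>
    induction c using Fin.cases with
    | zero =>
      have : ((r'.succ : Fin (m+1)) : ℕ) ≠ ((0 : Fin (n+1)) : ℕ) := by
        simp [Fin.val_succ]
      simp [diagMat, this]
    | succ c' =>
      simp only [extC_succ_succ, diagMat, Matrix.of_apply, Fin.val_succ]
      by_cases h : (r' : ℕ) = (c' : ℕ)
      · rw [if_pos h, if_pos (by omega), hs]
      · rw [if_neg h, if_neg (by omega)]

theorem exists_SNF [IsLocalRing L] [IsPrincipalIdealRing L] [Fintype L] :
    ∀ (m n : ℕ) (A : Matrix (Fin m) (Fin n) L),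
      ∃ (U : Matrix (Fin m) (Fin m) L) (V : Matrix (Fin n) (Fin n) L) (d : ℕ → L),
        U * A * V = diagMat m n d ∧ IsUnit U ∧ IsUnit V ∧
        (∀ j, d j ∣ d (j+1)) ∧ (∀ j, min m n ≤ j → d j = 0) := by
  intro m
  induction m with
  | zero =>
    intro n A
    refine ⟨1, 1, fun _ => 0, ?_, isUnit_one, isUnit_one, fun j => dvd_rfl, fun j _ => rfl⟩
    ext r c
    exact r.elim0
  | succ m' ih =>
    intro n A
    match n with
    | 0 =>
      refine ⟨1, 1, fun _ => 0, ?_, isUnit_one, isUnit_one, fun j => dvd_rfl, fun j _ => rfl⟩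
      ext r c
      exact c.elim0
    | n' + 1 => ?_
    classical
    -- pivot
    have htot := dvd_total_of_local (L := L)
    obtain ⟨g, hgmem, hgall⟩ := exists_dvd_all_set htot
      (Set.range (fun rc : Fin (m'+1) × Fin (n'+1) => A rc.1 rc.2)) ⟨A 0 0, ⟨(0,0), rfl⟩⟩
    obtain ⟨⟨r0, c0⟩, hg⟩ := hgmem
    set er : Equiv.Perm (Fin (m'+1)) := Equiv.swap 0 r0 with her
    set ec : Equiv.Perm (Fin (n'+1)) := Equiv.swap 0 c0 with hec
    set A' : Matrix (Fin (m'+1)) (Fin (n'+1)) L := A.submatrix er ec with hA'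
    set a : L := A' 0 0 with ha
    have ha0 : a = A r0 c0 := by
      rw [ha, hA', Matrix.submatrix_apply, her, hec, Equiv.swap_apply_left, Equiv.swap_apply_left]
    have hpiv : ∀ r c, a ∣ A' r c := by
      intro r c
      rw [ha0]
      exact dvd_trans (hg ▸ dvd_rfl) (hgall _ ⟨(er r, ec c), rfl⟩)
    choose q hq using fun r => hpiv r 0
    choose p hp using fun c => hpiv 0 c
    set NL : Matrix (Fin (m'+1)) (Fin (m'+1)) L :=
      Matrix.of (fun r c => if c = 0 then (if r = 0 then 0 else -q r) else 0) with hNL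
    set NR : Matrix (Fin (n'+1)) (Fin (n'+1)) L :=
      Matrix.of (fun r c => if r = 0 then (if c = 0 then 0 else -p c) else 0) with hNR
    set U1 := (1 : Matrix (Fin (m'+1)) (Fin (m'+1)) L) + NL with hU1
    set V1 := (1 : Matrix (Fin (n'+1)) (Fin (n'+1)) L) + NR with hV1
    have hNLsq : NL * NL = 0 := by
      ext r c
      rw [Matrix.mul_apply]
      apply Finset.sum_eq_zero
      intro t _
      by_cases ht : t = (0 : Fin (m'+1))
      · subst ht; simp [hNL]
      · simp [hNL, ht]
    have hNRsq : NR * NR = 0 := by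
      ext r c
      rw [Matrix.mul_apply]
      apply Finset.sum_eq_zero
      intro t _
      by_cases ht : t = (0 : Fin (n'+1))
      · subst ht; simp [hNR]
      · simp [hNR, ht]
    have hU1unit : IsUnit U1 := by
      apply matrix_isUnit_of_mul_eq_one (B := 1 - NL)
      have : U1 * (1 - NL) = 1 + NL - NL - NL * NL := by rw [hU1]; noncomm_ring
      rw [this, hNLsq]
      abel
    have hV1unit : IsUnit V1 := by
      apply matrix_isUnit_of_mul_eq_one (B := 1 - NR)
      have : V1 * (1 - NR) = 1 + NR - NR - NR * NR := by rw [hV1]; noncomm_ring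
      rw [this, hNRsq]
      abel
    have hM1 : ∀ r c, (U1 * A') r c = A' r c + (if r = 0 then 0 else -q r) * A' 0 c := by
      intro r c
      rw [hU1, Matrix.add_mul, Matrix.one_mul, Matrix.add_apply]
      congr 1
      rw [Matrix.mul_apply, Finset.sum_eq_single (0 : Fin (m'+1))]
      · simp [hNL]
      · intro b _ hb; simp [hNL, hb]
      · intro h; exact absurd (Finset.mem_univ _) h
    have hB2 : ∀ r c, (U1 * A' * V1) r c =
        (U1 * A') r c + (U1 * A') r 0 * (if c = 0 then 0 else -p c) := by
      intro r c
      rw [hV1, Matrix.mul_add, Matrix.mul_one, Matrix.add_apply]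
      congr 1
      rw [Matrix.mul_apply, Finset.sum_eq_single (0 : Fin (n'+1))]
      · simp [hNR]
      · intro b _ hb; simp [hNR, hb]
      · intro h; exact absurd (Finset.mem_univ _) h
    set A'' : Matrix (Fin m') (Fin n') L :=
      Matrix.of (fun r c => A' r.succ c.succ - q r.succ * A' 0 c.succ) with hA''
    have key : U1 * A' * V1 = extC a A'' := by
      ext r c
      rw [hB2]
      induction r using Fin.cases with
      | zero =>
        induction c using Fin.cases with
        | zero =>
          rw [if_pos rfl, mul_zero, add_zero, hM1, if_pos rfl, zero_mul, add_zero,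
            extC_zero_zero, ha]
        | succ c' =>
          rw [if_neg (Fin.succ_ne_zero c'), hM1, hM1, if_pos rfl, extC_zero_succ,
            hp c'.succ, ← ha]
          ring
      | succ r' =>
        induction c using Fin.cases with
        | zero =>
          rw [if_pos rfl, mul_zero, add_zero, hM1, if_neg (Fin.succ_ne_zero r'),
            extC_succ_zero, hq r'.succ, ← ha]
          ring
        | succ c' =>
          rw [if_neg (Fin.succ_ne_zero c'), hM1, hM1, if_neg (Fin.succ_ne_zero r'),
            extC_succ_succ, hA'', hq r'.succ, ← ha]
          simp only [Matrix.of_apply]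
          ring
    obtain ⟨U'', V'', d'', hsnf, hU'', hV'', hchain'', hzero''⟩ := ih n' A''
    have hAa : ∀ r c, a ∣ A'' r c := by
      intro r c
      rw [hA'']
      exact dvd_sub (hpiv _ _) (Dvd.dvd.mul_left (hpiv _ _) _)
    have hDa : ∀ j, a ∣ d'' j := by
      intro j
      by_cases hj : j < min m' n'
      · have hjm : j < m' := lt_of_lt_of_le hj (min_le_left _ _)
        have hjn : j < n' := lt_of_lt_of_le hj (min_le_right _ _)
        have : d'' j = (U'' * A'' * V'') ⟨j, hjm⟩ ⟨j, hjn⟩ := by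
          rw [hsnf]; simp [diagMat]
        rw [this, Matrix.mul_assoc, Matrix.mul_apply]
        apply Finset.dvd_sum
        intro t _
        apply Dvd.dvd.mul_left
        rw [Matrix.mul_apply]
        apply Finset.dvd_sum
        intro u _
        exact Dvd.dvd.mul_right (hAa _ _) _
      · rw [hzero'' j (not_lt.mp hj)]
        exact dvd_zero a
    set d : ℕ → L := fun j => Nat.casesOn j a (fun j' => d'' j') with hd
    have hchain : ∀ j, d j ∣ d (j+1) := by
      intro j
      cases j with
      | zero => exact hDa 0
      | succ j' => exact hchain'' j'
    have hztail : ∀ j, min (m'+1) (n'+1) ≤ j → d j = 0 := by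
      intro j hj
      rw [Nat.succ_min_succ] at hj
      cases j with
      | zero => omega
      | succ j' => exact hzero'' j' (Nat.succ_le_succ_iff.mp hj)
    have hfinal : (extC 1 U'' * U1) * A' * (V1 * extC 1 V'') = diagMat (m'+1) (n'+1) d := by
      have h1 : (extC 1 U'' * U1) * A' * (V1 * extC 1 V'')
          = extC 1 U'' * (U1 * A' * V1) * extC 1 V'' := by
        simp only [Matrix.mul_assoc]
      rw [h1, key, extC_mul, extC_mul, one_mul, mul_one]
      rw [hsnf]
      exact extC_diagMat a d'' d rfl (fun j => rfl)
    -- permutation step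
    set Pr : Matrix (Fin (m'+1)) (Fin (m'+1)) L := (1 : Matrix _ _ L).submatrix er id with hPr
    set Pc : Matrix (Fin (n'+1)) (Fin (n'+1)) L := (1 : Matrix _ _ L).submatrix ec id with hPc
    have claim1 : ∀ {w : ℕ} (B : Matrix (Fin (m'+1)) (Fin w) L), Pr * B = B.submatrix er id := by
      intro w B
      ext r c
      rw [Matrix.mul_apply, Finset.sum_eq_single (er r)]
      · rw [hPr]; simp [Matrix.one_apply]
      · intro b _ hb
        rw [hPr]
        simp [Matrix.one_apply, (Ne.symm hb)]
      · intro h; exact absurd (Finset.mem_univ _) h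
    have claim2 : ∀ {w : ℕ} (B : Matrix (Fin w) (Fin (n'+1)) L), B * Pc = B.submatrix id ec := by
      intro w B
      ext r c
      rw [Matrix.mul_apply, Finset.sum_eq_single (ec c)]
      · have hcc : ec (ec c) = c := by rw [hec]; exact Equiv.swap_apply_self _ _ _
        rw [hPc]
        simp [Matrix.one_apply, hcc]
      · intro b _ hb
        rw [hPc]
        have : ec b ≠ c := by
          intro hEq
          apply hb
          rw [← hEq, hec, Equiv.swap_apply_self]
        simp [Matrix.one_apply, this]
      · intro h; exact absurd (Finset.mem_univ _) h
    have hPrPr : Pr * Pr = 1 := by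
      rw [claim1 Pr, hPr, Matrix.submatrix_submatrix]
      ext r c
      have hrc : er (er r) = r := by rw [her]; exact Equiv.swap_apply_self _ _ _
      simp [Matrix.one_apply, hrc]
    have hPcPc : Pc * Pc = 1 := by
      rw [claim2 Pc, hPc, Matrix.submatrix_submatrix]
      ext r c
      simp [Matrix.one_apply, Equiv.apply_eq_iff_eq]
    have hPA : Pr * A * Pc = A' := by
      rw [claim1 A, claim2, Matrix.submatrix_submatrix, hA']
      rfl
    refine ⟨extC 1 U'' * U1 * Pr, Pc * (V1 * extC 1 V''), d, ?_, ?_, ?_, hchain, hztail⟩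
    · have : extC 1 U'' * U1 * Pr * A * (Pc * (V1 * extC 1 V''))
          = extC 1 U'' * U1 * (Pr * A * Pc) * (V1 * extC 1 V'') := by
        simp only [Matrix.mul_assoc]
      rw [this, hPA, ← hfinal]
    · obtain ⟨u, hu⟩ := hU''
      have h1 : extC (1:L) U'' * extC 1 (↑u⁻¹ : Matrix (Fin m') (Fin m') L) = 1 := by
        rw [extC_mul, one_mul, ← hu, Units.mul_inv, extC_one]
      obtain ⟨u1, hu1⟩ := hU1unit
      apply matrix_isUnit_of_mul_eq_one
        (B := Pr * ((↑u1⁻¹ : Matrix _ _ L) * extC 1 (↑u⁻¹ : Matrix (Fin m') (Fin m') L)))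
      calc extC 1 U'' * U1 * Pr * (Pr * ((↑u1⁻¹ : Matrix _ _ L) * extC 1 (↑u⁻¹ : Matrix (Fin m') (Fin m') L)))
          = extC 1 U'' * (U1 * ((Pr * Pr) * ((↑u1⁻¹ : Matrix _ _ L) * extC 1 (↑u⁻¹ : Matrix (Fin m') (Fin m') L)))) := by
            simp only [Matrix.mul_assoc]
      _ = extC 1 U'' * ((U1 * (↑u1⁻¹ : Matrix _ _ L)) * extC 1 (↑u⁻¹ : Matrix (Fin m') (Fin m') L)) := by
            rw [hPrPr, Matrix.one_mul, Matrix.mul_assoc]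
      _ = 1 := by
            have : U1 * (↑u1⁻¹ : Matrix _ _ L) = 1 := by rw [← hu1, Units.mul_inv]
            rw [this, Matrix.one_mul, h1]
    · obtain ⟨v, hv⟩ := hV''
      have h1 : extC (1:L) V'' * extC 1 (↑v⁻¹ : Matrix (Fin n') (Fin n') L) = 1 := by
        rw [extC_mul, one_mul, ← hv, Units.mul_inv, extC_one]
      obtain ⟨v1, hv1⟩ := hV1unit
      apply matrix_isUnit_of_mul_eq_one
        (B := extC 1 (↑v⁻¹ : Matrix (Fin n') (Fin n') L) * (↑v1⁻¹ : Matrix _ _ L) * Pc)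
      calc Pc * (V1 * extC 1 V'') * (extC 1 (↑v⁻¹ : Matrix (Fin n') (Fin n') L) * (↑v1⁻¹ : Matrix _ _ L) * Pc)
          = Pc * (V1 * ((extC 1 V'' * extC 1 (↑v⁻¹ : Matrix (Fin n') (Fin n') L)) * ((↑v1⁻¹ : Matrix _ _ L) * Pc))) := by
            simp only [Matrix.mul_assoc]
      _ = Pc * ((V1 * (↑v1⁻¹ : Matrix _ _ L)) * Pc) := by
            have h2 : extC (1:L) V'' * extC 1 (↑v⁻¹ : Matrix (Fin n') (Fin n') L) = 1 := h1
            rw [h2, Matrix.one_mul, Matrix.mul_assoc]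
      _ = 1 := by
            have : V1 * (↑v1⁻¹ : Matrix _ _ L) = 1 := by rw [← hv1, Units.mul_inv]
            rw [this, Matrix.one_mul, hPcPc]

end SNF

def appendCol {L : Type*} [CommRing L] {m k : ℕ}
    (M : Matrix (Fin m) (Fin k) L) (v : Fin m → L) :
    Matrix (Fin m) (Fin (k + 1)) L :=
  Matrix.of fun i j => if h : j.val < k then M i ⟨j.val, h⟩ else v i

section Append
variable {L : Type*} [CommRing L] {m n k i : ℕ}

lemma appendCol_castSucc (M : Matrix (Fin m) (Fin k) L) (v : Fin m → L) (r : Fin m)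
    (c : Fin k) : appendCol M v r c.castSucc = M r c := by
  simp only [appendCol, Matrix.of_apply, Fin.coe_castSucc, dif_pos c.isLt]

lemma appendCol_last (M : Matrix (Fin m) (Fin k) L) (v : Fin m → L) (r : Fin m) :
    appendCol M v r (Fin.last k) = v r := by
  simp [appendCol]

lemma mul_appendCol (U : Matrix (Fin m) (Fin m) L) (M : Matrix (Fin m) (Fin k) L)
    (v : Fin m → L) : U * appendCol M v = appendCol (U * M) (U.mulVec v) := by
  ext r j
  by_cases h : (j : ℕ) < k
  · simp only [appendCol, Matrix.of_apply, Matrix.mul_apply, dif_pos h]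
  · simp only [appendCol, Matrix.of_apply, Matrix.mul_apply, dif_neg h, Matrix.mulVec,
      dotProduct]

lemma minorsIdeal_le_appendCol (M : Matrix (Fin m) (Fin k) L) (v : Fin m → L) :
    minorsIdeal i M ≤ minorsIdeal i (appendCol M v) := by
  rw [minorsIdeal, Ideal.span_le]
  rintro x ⟨σ, τ, hσ, hτ, rfl⟩
  have hmono : StrictMono (fun t => (τ t).castSucc) := by
    intro u v huv
    exact (Fin.castSucc_lt_castSucc_iff).mpr (hτ huv)
  have heq : M.submatrix σ τ = (appendCol M v).submatrix σ (fun t => (τ t).castSucc) := by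
    ext s t
    rw [Matrix.submatrix_apply, Matrix.submatrix_apply, appendCol_castSucc]
  rw [heq]
  exact det_submatrix_mem_minorsIdeal _ hσ hmono

lemma strictMono_snoc_last {j k : ℕ} {θ : Fin j → Fin k} (hθ : StrictMono θ) :
    StrictMono (Fin.snoc (fun t => (θ t).castSucc) (Fin.last k) : Fin (j+1) → Fin (k+1)) := by
  intro a b hab
  induction b using Fin.lastCases with
  | last =>
    have ha : a ≠ Fin.last j := Fin.ne_last_of_lt hab
    obtain ⟨a', rfl⟩ := Fin.eq_castSucc_of_ne_last ha
    rw [Fin.snoc_castSucc, Fin.snoc_last]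
    exact Fin.castSucc_lt_last _
  | cast b' =>
    have ha : a ≠ Fin.last j := Fin.ne_last_of_lt (lt_of_lt_of_le hab (Fin.le_last _))
    obtain ⟨a', rfl⟩ := Fin.eq_castSucc_of_ne_last ha
    rw [Fin.snoc_castSucc, Fin.snoc_castSucc]
    exact (Fin.castSucc_lt_castSucc_iff).mpr (hθ ((Fin.castSucc_lt_castSucc_iff).mp hab))

end Append

section Heart
variable {L : Type*} [CommRing L] [IsLocalRing L] [IsPrincipalIdealRing L] [Fintype L]

theorem heart_lemma {m n k i' : ℕ} (hkm : k ≤ m) (hkn : k ≤ n) (hik : i' + 1 ≤ k)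
    (d : ℕ → L) (hd : ∀ j, d j ∣ d (j+1)) (G : Matrix (Fin n) (Fin k) L)
    (hprev : minorsIdeal i' (diagMat m n d * G) = minorsIdeal i' (diagMat m n d))
    (hcur : minorsIdeal (i'+1) (diagMat m n d * G) ≠ minorsIdeal (i'+1) (diagMat m n d)) :
    ∃ y : Fin n → L,
      minorsIdeal (i'+1) (appendCol (diagMat m n d * G) ((diagMat m n d).mulVec y)) ≠
        minorsIdeal (i'+1) (diagMat m n d * G) := by
  classical
  have htot := dvd_total_of_local (L := L)
  have him : i' + 1 ≤ m := le_trans hik hkm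
  have hin : i' + 1 ≤ n := le_trans hik hkn
  have him' : i' ≤ m := Nat.le_of_succ_le him
  have hin' : i' ≤ n := Nat.le_of_succ_le hin
  have hik' : i' ≤ k := Nat.le_of_succ_le hik
  set D := diagMat m n d with hD
  -- the two comparison facts
  have hIle : minorsIdeal (i'+1) (D * G) ≤ Ideal.span {∏ t ∈ Finset.range (i'+1), d t} :=
    minorsIdeal_diag_mul_le hd G
  have hDia : minorsIdeal (i'+1) D = Ideal.span {∏ t ∈ Finset.range (i'+1), d t} :=
    minorsIdeal_diagMat hd him hin
  -- helper for the contradiction when the (i'+1)-st product vanishes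
  have contra_of_P0 : (∏ t ∈ Finset.range (i'+1), d t) = 0 → False := by
    intro hP0
    apply hcur
    apply le_antisymm
    · rw [hDia, hP0]
      exact hIle.trans (le_of_eq (by rw [hP0]))
    · rw [hDia, hP0, Ideal.span_singleton_eq_bot.mpr rfl]
      exact bot_le
  -- a single minor generating `minorsIdeal i' (D * G)`
  have hSne : ∃ x, x ∈ { x | ∃ σ : Fin i' → Fin m, ∃ τ : Fin i' → Fin k,
      StrictMono σ ∧ StrictMono τ ∧ x = ((D * G).submatrix σ τ).det } :=
    ⟨_, Fin.castLE him', Fin.castLE hik', Fin.strictMono_castLE him',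
      Fin.strictMono_castLE hik', rfl⟩
  obtain ⟨g, hgS, hgspan⟩ := exists_span_eq_span_singleton htot _ hSne
  obtain ⟨ρ, θ, hρ, hθ, rfl⟩ := hgS
  set g := ((D * G).submatrix ρ θ).det with hgdef
  have hspan' : Ideal.span {g} = Ideal.span {∏ t ∈ Finset.range i', d t} := by
    rw [← hgspan]
    show minorsIdeal i' (D * G) = _
    rw [hprev, minorsIdeal_diagMat hd him' hin']
  have hxP : ∃ x, (∏ t ∈ Finset.range i', d t) = x * g := by
    have : (∏ t ∈ Finset.range i', d t) ∈ Ideal.span {g} := by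
      rw [hspan']
      exact Ideal.subset_span rfl
    obtain ⟨x, hx⟩ := Ideal.mem_span_singleton.mp this
    exact ⟨x, by rw [hx, mul_comm]⟩
  obtain ⟨x, hx⟩ := hxP
  by_cases hrows : ∀ t, (ρ t : ℕ) < n
  case neg =>
    exfalso
    push_neg at hrows
    obtain ⟨t0, ht0⟩ := hrows
    have hg0 : g = 0 := by
      apply Matrix.det_eq_zero_of_row_eq_zero t0
      intro c
      rw [Matrix.submatrix_apply, hD, diagMat_mul_apply, dif_neg (not_lt.mpr ht0)]
    apply contra_of_P0
    rw [Finset.prod_range_succ, hx, hg0, mul_zero, zero_mul]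
  case pos =>
  -- find a fresh row index `r0 < i'+1` not hit by `ρ`
  set T : Finset (Fin m) := Finset.univ.image ρ with hT
  have hTcard : T.card = i' := by
    rw [hT, Finset.card_image_of_injective _ hρ.injective, Finset.card_univ, Fintype.card_fin]
  set F : Finset (Fin m) := Finset.univ.image (fun t : Fin (i'+1) => Fin.castLE him t) with hF
  have hFcard : F.card = i' + 1 := by
    rw [hF, Finset.card_image_of_injective _ (Fin.strictMono_castLE him).injective,
      Finset.card_univ, Fintype.card_fin]
  have hnotsub : ¬ F ⊆ T := by
    intro hsub
    have := Finset.card_le_card hsub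
    omega
  obtain ⟨r0, hr0F, hr0T⟩ := Finset.not_subset.mp hnotsub
  have hr0val : (r0 : ℕ) < i' + 1 := by
    rw [hF] at hr0F
    obtain ⟨t, _, rfl⟩ := Finset.mem_image.mp hr0F
    exact t.isLt
  -- build the merged row selection
  set s : Finset (Fin m) := insert r0 T with hs
  have hscard : s.card = i' + 1 := by
    rw [hs, Finset.card_insert_of_notMem hr0T, hTcard]
  set σN : Fin (i'+1) → Fin m := fun t => s.orderEmbOfFin hscard t with hσN
  have hσNmono : StrictMono σN := (s.orderEmbOfFin hscard).strictMono
  have hr0mem : r0 ∈ s := Finset.mem_insert_self _ _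
  have hs0ex : ∃ s0, σN s0 = r0 := by
    have : r0 ∈ Set.range (s.orderEmbOfFin hscard) := by
      rw [Finset.range_orderEmbOfFin]
      exact hr0mem
    obtain ⟨s0, hs0⟩ := this
    exact ⟨s0, hs0⟩
  obtain ⟨s0, hs0⟩ := hs0ex
  have hσρ : (fun t => σN (s0.succAbove t)) = ρ := by
    have h1 : ∀ t, σN (s0.succAbove t) ∈ T := by
      intro t
      have hmem : σN (s0.succAbove t) ∈ s := by
        rw [hσN]
        have := Finset.range_orderEmbOfFin s hscard
        have : σN (s0.succAbove t) ∈ Set.range (s.orderEmbOfFin hscard) :=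
          ⟨s0.succAbove t, rfl⟩
        rw [Finset.range_orderEmbOfFin] at this
        exact this
      rw [hs, Finset.mem_insert] at hmem
      rcases hmem with h | h
      · exfalso
        have : s0.succAbove t = s0 := hσNmono.injective (by rw [hs0, h])
        exact Fin.succAbove_ne s0 t this
      · exact h
    have h2 : StrictMono (fun t => σN (s0.succAbove t)) :=
      hσNmono.comp (Fin.strictMono_succAbove s0)
    have h3 : ∀ t, ρ t ∈ T := fun t => Finset.mem_image.mpr ⟨t, Finset.mem_univ t, rfl⟩
    rw [Finset.orderEmbOfFin_unique hTcard h1 h2, Finset.orderEmbOfFin_unique hTcard h3 hρ]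
  -- the column selection: old columns plus the appended one
  set τN : Fin (i'+1) → Fin (k+1) :=
    Fin.snoc (fun t => (θ t).castSucc) (Fin.last k) with hτN
  have hτNmono : StrictMono τN := strictMono_snoc_last hθ
  -- the probe vector
  set r0' : Fin n := ⟨(r0 : ℕ), lt_of_lt_of_le hr0val hin⟩ with hr0'
  set y : Fin n → L := Pi.single r0' 1 with hy
  refine ⟨y, ?_⟩
  intro hEq
  -- the new minor
  set N : Matrix (Fin (i'+1)) (Fin (i'+1)) L :=
    (appendCol (D * G) (D.mulVec y)).submatrix σN τN with hN
  have hcol : ∀ u, N u (Fin.last i') = if u = s0 then d (r0 : ℕ) else 0 := by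
    intro u
    rw [hN, Matrix.submatrix_apply]
    have hlast : τN (Fin.last i') = Fin.last k := by simp [hτN]
    rw [hlast, appendCol_last]
    have hmv : D.mulVec y (σN u) = D (σN u) r0' := by
      simp [hy, Matrix.mulVec_single]
    rw [hmv, hD]
    by_cases hu : u = s0
    · subst hu
      rw [if_pos rfl]
      have : (σN u : ℕ) = (r0' : ℕ) := by rw [hs0]
      simp [diagMat, this, hs0, hr0']
    · rw [if_neg hu]
      have : (σN u : ℕ) ≠ (r0' : ℕ) := by
        intro hv
        apply hu
        apply hσNmono.injective
        rw [hs0]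
        exact Fin.ext (by rw [hv])
      simp [diagMat, this]
  have hsub : N.submatrix s0.succAbove (Fin.last i').succAbove = (D * G).submatrix ρ θ := by
    ext u t
    rw [Fin.succAbove_last, Matrix.submatrix_apply, Matrix.submatrix_apply, hN,
      Matrix.submatrix_apply]
    have hcast : τN t.castSucc = (θ t).castSucc := by simp [hτN]
    rw [hcast, appendCol_castSucc, ← hσρ]
  have hdetN : N.det = (-1 : L)^((s0 : ℕ) + i') * (d (r0 : ℕ) * g) := by
    rw [Matrix.det_succ_column N (Fin.last i')]
    rw [Finset.sum_eq_single s0]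
    · rw [hcol s0, if_pos rfl, hsub]
      rw [show ((Fin.last i' : Fin (i'+1)) : ℕ) = i' from rfl]
      ring
    · intro b _ hb
      rw [hcol b, if_neg hb, mul_zero, zero_mul]
    · intro h; exact absurd (Finset.mem_univ _) h
  -- the new minor lies in the ideal of the appended matrix, hence in that of `D*G`
  have hmemN : N.det ∈ minorsIdeal (i'+1) (appendCol (D * G) (D.mulVec y)) :=
    det_submatrix_mem_minorsIdeal _ hσNmono hτNmono
  rw [hEq] at hmemN
  have hdg : d (r0 : ℕ) * g ∈ minorsIdeal (i'+1) (D * G) := by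
    have heps : ((-1 : L)^((s0 : ℕ) + i')) * ((-1 : L)^((s0 : ℕ) + i')) = 1 := by
      rw [← pow_add]
      exact Even.neg_one_pow ⟨(s0 : ℕ) + i', rfl⟩
    have : d (r0 : ℕ) * g = (-1 : L)^((s0 : ℕ) + i') * N.det := by
      rw [hdetN, ← mul_assoc, heps, one_mul]
    rw [this]
    exact Ideal.mul_mem_left _ _ hmemN
  -- conclude
  obtain ⟨z, hz⟩ := chain_dvd hd (show (r0 : ℕ) ≤ i' from Nat.lt_succ_iff.mp hr0val)
  have hP1 : (∏ t ∈ Finset.range (i'+1), d t) ∈ minorsIdeal (i'+1) (D * G) := by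
    have hPeq : (∏ t ∈ Finset.range (i'+1), d t) = (x * z) * (d (r0 : ℕ) * g) := by
      rw [Finset.prod_range_succ, hx, hz]
      ring
    rw [hPeq]
    exact Ideal.mul_mem_left _ _ hdg
  apply hcur
  apply le_antisymm
  · rw [hDia]
    exact hIle
  · rw [hDia, Ideal.span_le, Set.singleton_subset_iff]
    exact hP1

end Heart

section Main
variable {L : Type*} [CommRing L] [IsLocalRing L] [IsPrincipalIdealRing L] [Fintype L]

theorem exists_bad_y {m n k : ℕ} (hkm : k ≤ m) (hkn : k ≤ n)
    (A : Matrix (Fin m) (Fin n) L) (Q : Matrix (Fin n) (Fin k) L)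
    (hdiff : ¬ (∀ i ≤ k, minorsIdeal i (A * Q) = minorsIdeal i A)) :
    ∃ (y : Fin n → L) (i : ℕ), i ≤ k ∧
      minorsIdeal i (appendCol (A * Q) (A.mulVec y)) ≠ minorsIdeal i (A * Q) := by
  classical
  push_neg at hdiff
  have hP : ∃ i, i ≤ k ∧ minorsIdeal i (A * Q) ≠ minorsIdeal i A := hdiff
  set i := Nat.find hP with hidef
  have hPi := Nat.find_spec hP
  rw [← hidef] at hPi
  have hi0 : i ≠ 0 := by
    intro h
    rw [h] at hPi
    exact hPi.2 (by rw [minorsIdeal_zero, minorsIdeal_zero])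
  obtain ⟨i', hii'⟩ : ∃ i', i = i' + 1 := ⟨i - 1, by omega⟩
  have hik : i' + 1 ≤ k := hii' ▸ hPi.1
  have hprevAQ : minorsIdeal i' (A * Q) = minorsIdeal i' A := by
    by_contra hne
    exact Nat.find_min hP (show i' < i by omega) ⟨by omega, hne⟩
  obtain ⟨U, V, d, hsnf, hU, hV, hchain, -⟩ := exists_SNF m n A
  obtain ⟨u, hu⟩ := hU
  obtain ⟨Ui, hUUi, hUiU⟩ : ∃ Ui : Matrix (Fin m) (Fin m) L, U * Ui = 1 ∧ Ui * U = 1 :=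
    ⟨↑u⁻¹, by rw [← hu]; exact u.mul_inv, by rw [← hu]; exact u.inv_mul⟩
  obtain ⟨v, hv⟩ := hV
  obtain ⟨Vi, hVVi, hViV⟩ : ∃ Vi : Matrix (Fin n) (Fin n) L, V * Vi = 1 ∧ Vi * V = 1 :=
    ⟨↑v⁻¹, by rw [← hv]; exact v.mul_inv, by rw [← hv]; exact v.inv_mul⟩
  have hA : A = Ui * diagMat m n d * Vi := by
    rw [← hsnf]
    have e1 : Ui * (U * A * V) * Vi = (Ui * U) * A * (V * Vi) := by
      simp only [Matrix.mul_assoc]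
    rw [e1, hUiU, hVVi, Matrix.one_mul, Matrix.mul_one]
  set G : Matrix (Fin n) (Fin k) L := Vi * Q with hG
  have hAQ : A * Q = Ui * (diagMat m n d * G) := by
    rw [hA, hG]
    simp only [Matrix.mul_assoc]
  have hIAQ : ∀ j, minorsIdeal j (A * Q) = minorsIdeal j (diagMat m n d * G) := by
    intro j
    rw [hAQ]
    exact minorsIdeal_mul_left_eq hUUi _
  have hIA : ∀ j, minorsIdeal j A = minorsIdeal j (diagMat m n d) := by
    intro j
    rw [hA, Matrix.mul_assoc, minorsIdeal_mul_left_eq hUUi,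
      minorsIdeal_mul_right_eq hViV]
  have hprev' : minorsIdeal i' (diagMat m n d * G) = minorsIdeal i' (diagMat m n d) := by
    rw [← hIAQ, ← hIA, hprevAQ]
  have hcur' : minorsIdeal (i'+1) (diagMat m n d * G) ≠ minorsIdeal (i'+1) (diagMat m n d) := by
    rw [← hIAQ, ← hIA]
    exact hii' ▸ hPi.2
  obtain ⟨y', hy'⟩ := heart_lemma hkm hkn hik d hchain G hprev' hcur'
  refine ⟨V.mulVec y', i' + 1, hik, ?_⟩
  have hAy : A.mulVec (V.mulVec y')
      = Ui.mulVec ((diagMat m n d).mulVec y') := by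
    rw [hA, Matrix.mulVec_mulVec, Matrix.mul_assoc (Ui * diagMat m n d) Vi V, hViV,
      Matrix.mul_one, ← Matrix.mulVec_mulVec]
  have happ : appendCol (A * Q) (A.mulVec (V.mulVec y'))
      = Ui * appendCol (diagMat m n d * G) ((diagMat m n d).mulVec y') := by
    rw [mul_appendCol, ← hAQ, ← hAy]
  rw [happ, minorsIdeal_mul_left_eq hUUi, hIAQ]
  exact hy'

end Main

/-- Over a finite local PIR `L` with residue field of `p` elements:
if the first `k` invariant factors of `AQ` differ from those of `A`
(equivalently, some determinantal divisor ideal differs), then for a uniformly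
random `y ∈ Lⁿ`, `S_k([AQ | Ay]) = S_k(AQ)` with probability at most `1/p`. -/
theorem prob_append_agrees {L : Type*} [CommRing L] [IsLocalRing L]
    [IsPrincipalIdealRing L] [Fintype L] (p : ℕ) (hp : p.Prime)
    (hres : Nat.card (IsLocalRing.ResidueField L) = p)
    {m n k : ℕ} (hkm : k ≤ m) (hkn : k ≤ n)
    (A : Matrix (Fin m) (Fin n) L) (Q : Matrix (Fin n) (Fin k) L)
    (hdiff : ¬ (∀ i ≤ k, minorsIdeal i (A * Q) = minorsIdeal i A)) :
    p * Nat.card {y : Fin n → L //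
        ∀ i ≤ k, minorsIdeal i (appendCol (A * Q) (A.mulVec y)) =
          minorsIdeal i (A * Q)} ≤
      Nat.card (Fin n → L) := by
  classical
  obtain ⟨ys, i0, hi0k, hbad⟩ := exists_bad_y hkm hkn A Q hdiff
  set I := minorsIdeal i0 (A * Q) with hI
  have hge : I ≤ minorsIdeal i0 (appendCol (A * Q) (A.mulVec ys)) :=
    minorsIdeal_le_appendCol _ _
  -- find a generator of the appended ideal outside `I`
  have hexgen : ∃ x ∈ { x | ∃ σ : Fin i0 → Fin m, ∃ τ : Fin i0 → Fin (k+1),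
      StrictMono σ ∧ StrictMono τ ∧
      x = ((appendCol (A * Q) (A.mulVec ys)).submatrix σ τ).det }, x ∉ I := by
    by_contra h
    push_neg at h
    apply hbad
    apply le_antisymm ?_ hge
    rw [minorsIdeal, Ideal.span_le]
    exact h
  obtain ⟨x, ⟨σ, τ, hσ, hτ, rfl⟩, hxI⟩ := hexgen
  -- τ must hit the appended column
  have hlast : ∃ t0, τ t0 = Fin.last k := by
    by_contra h
    push_neg at h
    have hlt : ∀ t, (τ t : ℕ) < k := by
      intro t
      have h1 : (τ t : ℕ) < k + 1 := (τ t).isLt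
      have h2 : (τ t : ℕ) ≠ k := fun hEq => h t (Fin.ext hEq)
      omega
    have hτ' : StrictMono (fun t => (⟨(τ t : ℕ), hlt t⟩ : Fin k)) := by
      intro a b hab
      exact Fin.lt_def.mpr (hτ hab)
    have heq : (appendCol (A * Q) (A.mulVec ys)).submatrix σ τ
        = (A * Q).submatrix σ (fun t => (⟨(τ t : ℕ), hlt t⟩ : Fin k)) := by
      ext s t
      simp only [Matrix.submatrix_apply, appendCol, Matrix.of_apply, dif_pos (hlt t)]
    rw [heq] at hxI
    exact hxI (det_submatrix_mem_minorsIdeal _ hσ hτ')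
  obtain ⟨t0, ht0⟩ := hlast
  -- the minor as a function of `y`, and its key update property
  set M : (Fin n → L) → Matrix (Fin i0) (Fin i0) L :=
    fun y => (appendCol (A * Q) (A.mulVec y)).submatrix σ τ with hM
  have hMup : ∀ y z : Fin n → L,
      (M y).updateCol t0 (fun s => A.mulVec z (σ s)) = M z := by
    intro y z
    ext s t
    by_cases ht : t = t0
    · subst ht
      rw [Matrix.updateCol_self]
      rw [hM]
      simp only [Matrix.submatrix_apply, ht0, appendCol_last]
    · rw [Matrix.updateCol_ne ht]
      have hne : τ t ≠ Fin.last k := by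
        intro hEq
        exact ht (hτ.injective (by rw [hEq, ht0]))
      have hltk : (τ t : ℕ) < k := by
        have h1 : (τ t : ℕ) < k + 1 := (τ t).isLt
        have h2 : (τ t : ℕ) ≠ k := fun hEq => hne (Fin.ext hEq)
        omega
      rw [hM]
      simp only [Matrix.submatrix_apply, appendCol, Matrix.of_apply, dif_pos hltk]
  have hφ : ∀ (y z : Fin n → L) (c : L), (M (y + c • z)).det = (M y).det + c * (M z).det := by
    intro y z c
    have hcol : (fun s => A.mulVec (y + c • z) (σ s))
        = (fun s => A.mulVec y (σ s)) + c • (fun s => A.mulVec z (σ s)) := by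
      funext s
      simp [Matrix.mulVec_add, Matrix.mulVec_smul]
    rw [← hMup y (y + c • z), hcol, Matrix.det_updateCol_add,
      Matrix.det_updateCol_smul, hMup y y, hMup y z]
  -- good vectors give minors in `I`
  have hgood : ∀ y : Fin n → L,
      (∀ i ≤ k, minorsIdeal i (appendCol (A * Q) (A.mulVec y)) = minorsIdeal i (A * Q)) →
      (M y).det ∈ I := by
    intro y hy
    have h1 := det_submatrix_mem_minorsIdeal (appendCol (A * Q) (A.mulVec y)) hσ hτ
    rw [hy i0 hi0k] at h1
    exact h1
  -- the injection
  have hfinRF : Finite (IsLocalRing.ResidueField L) :=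
    Finite.of_surjective _ Ideal.Quotient.mk_surjective
  set rep : IsLocalRing.ResidueField L → L :=
    Function.surjInv (f := IsLocalRing.residue L) Ideal.Quotient.mk_surjective with hrepdef
  have hrep : ∀ q, IsLocalRing.residue L (rep q) = q :=
    fun q => Function.surjInv_eq (f := IsLocalRing.residue L) Ideal.Quotient.mk_surjective q
  set Y := {y : Fin n → L //
      ∀ i ≤ k, minorsIdeal i (appendCol (A * Q) (A.mulVec y)) = minorsIdeal i (A * Q)} with hY
  set F : IsLocalRing.ResidueField L × Y → (Fin n → L) :=
    fun qy => qy.2.val + rep qy.1 • ys with hF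
  have hFinj : Function.Injective F := by
    rintro ⟨q1, y1, hy1⟩ ⟨q2, y2, hy2⟩ hFeq
    simp only [hF] at hFeq
    have hq : q1 = q2 := by
      by_contra hne
      have hdiffy : y1 = y2 + (rep q2 - rep q1) • ys := by
        funext j
        have := congrFun hFeq j
        simp only [Pi.add_apply, Pi.smul_apply, smul_eq_mul] at this ⊢
        linear_combination this
      have hdet : (M y1).det = (M y2).det + (rep q2 - rep q1) * (M ys).det := by
        rw [hdiffy]
        exact hφ y2 ys _
      have hunit : IsUnit (rep q2 - rep q1) := by
        by_contra hnu
        have hmem : rep q2 - rep q1 ∈ IsLocalRing.maximalIdeal L :=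
          (IsLocalRing.mem_maximalIdeal _).mpr hnu
        have : q2 - q1 = 0 := by
          rw [← hrep q2, ← hrep q1, ← map_sub]
          exact Ideal.Quotient.eq_zero_iff_mem.mpr hmem
        exact hne (by rw [← sub_eq_zero]; rw [← neg_sub q2 q1, this, neg_zero])
      obtain ⟨w, hw⟩ := hunit
      have h1 : (rep q2 - rep q1) * (M ys).det ∈ I := by
        have : (rep q2 - rep q1) * (M ys).det = (M y1).det - (M y2).det := by
          rw [hdet]; ring
        rw [this]
        exact Ideal.sub_mem _ (hgood y1 hy1) (hgood y2 hy2)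
      apply hxI
      have h2 : (M ys).det = ((w⁻¹ : Lˣ) : L) * ((rep q2 - rep q1) * (M ys).det) := by
        rw [← mul_assoc, ← hw, Units.inv_mul, one_mul]
      show (M ys).det ∈ I
      rw [h2]
      exact Ideal.mul_mem_left _ _ h1
    subst hq
    have hyy : y1 = y2 := by
      funext j
      have := congrFun hFeq j
      simp only [Pi.add_apply, Pi.smul_apply, smul_eq_mul] at this
      linear_combination this
    rw [Prod.mk.injEq]
    exact ⟨rfl, Subtype.ext hyy⟩
  calc p * Nat.card Y
      = Nat.card (IsLocalRing.ResidueField L) * Nat.card Y := by rw [hres]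
  _ = Nat.card (IsLocalRing.ResidueField L × Y) := (Nat.card_prod _ _).symm
  _ ≤ Nat.card (Fin n → L) := Nat.card_le_card_of_injective F hFinj
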